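/- Let κ be a regular uncountable cardinal. If □_κ fails, then the poset S(κ) (which adds a □_κ-sequence by initial segments) is not strongly <κ⁺-distributive. -/

import Mathlib

universe u v

/-- `D` is open (downward closed) and dense in the partial order `P`. -/
def OpenDense {P : Type u} [Preorder P] (D : Set P) : Prop :=
  (∀ p ∈ D, ∀ q, q ≤ p → q ∈ D) ∧ ∀ p : P, ∃ q, q ≤ p ∧ q ∈ D

/-- `P` is strongly `<κ`-distributive: for every `κ`-sequence of open dense sets and
every `p` there is a descending sequence (a thread) below `p` meeting them in order. -/
def StronglyDistrib (κ : Cardinal.{v}) (P : Type u) [Preorder P] : Prop :=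
  ∀ D : Ordinal.{v} → Set P, (∀ α < κ.ord, OpenDense (D α)) → ∀ p : P,
    ∃ f : Ordinal.{v} → P, f 0 ≤ p ∧
      (∀ β α, β ≤ α → α < κ.ord → f α ≤ f β) ∧
      ∀ α < κ.ord, f α ∈ D α

/-- `P` is `<κ`-distributive: intersections of fewer than `κ` open dense sets are dense. -/
def DistribLt (κ : Cardinal.{v}) (P : Type u) [Preorder P] : Prop :=
  ∀ γ < κ.ord, ∀ D : Ordinal.{v} → Set P, (∀ α < γ, OpenDense (D α)) →
    ∀ p : P, ∃ q, q ≤ p ∧ ∀ α < γ, q ∈ D α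

/-- `β` is a limit point of the set of ordinals `C`: `β > 0` and `C ∩ β` is
unbounded in `β`. -/
def IsLimitPtOrd (C : Set Ordinal.{v}) (β : Ordinal.{v}) : Prop :=
  0 < β ∧ ∀ γ < β, ∃ δ ∈ C, γ < δ ∧ δ < β

/-- `C` is club in the ordinal `α`: a set of ordinals below `α`, unbounded in `α`,
and containing all of its limit points below `α`. -/
def IsClubInOrd (α : Ordinal.{v}) (C : Set Ordinal.{v}) : Prop :=
  (∀ β ∈ C, β < α) ∧
  (∀ β < α, ∃ γ ∈ C, β ≤ γ) ∧
  (∀ β < α, IsLimitPtOrd C β → β ∈ C)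

/-- The order type of a set of ordinals. -/
noncomputable def otpSet (C : Set Ordinal.{v}) : Ordinal.{v + 1} :=
  Ordinal.type (Subrel ((· < ·) : Ordinal.{v} → Ordinal.{v} → Prop) (· ∈ C))

/-- `C` is a `□_κ`-sequence: for every limit ordinal `α < κ⁺`, `C α` is club in `α`
of order type `≤ κ`, and `C α ∩ β = C β` for every limit point `β < α` of `C α`. -/
def SquareSeq (κ : Cardinal.{v}) (C : Ordinal.{v} → Set Ordinal.{v}) : Prop :=
  ∀ α < (Order.succ κ).ord, Order.IsSuccLimit α →
    IsClubInOrd α (C α) ∧ otpSet (C α) ≤ Ordinal.lift.{v + 1, v} κ.ord ∧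
    ∀ β, IsLimitPtOrd (C α) β → β < α → C α ∩ Set.Iio β = C β

/-- A condition in the poset `S(κ)` adding a `□_κ`-sequence by initial segments: a
function whose domain is the set of limit ordinals `≤ bd` (for some limit ordinal
`bd < κ⁺`, and with value `∅` outside the domain), assigning to each limit `α ≤ bd`
a club subset of `α` of order type `≤ κ`, coherently. The order is end-extension. -/
structure SCond (κ : Cardinal.{v}) where
  /-- the largest element of the domain -/
  bd : Ordinal.{v}
  bd_lim : Order.IsSuccLimit bd
  bd_lt : bd < (Order.succ κ).ord
  /-- the underlying function -/
  f : Ordinal.{v} → Set Ordinal.{v}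
  dom_f : ∀ α : Ordinal.{v}, ¬(α ≤ bd ∧ Order.IsSuccLimit α) → f α = ∅
  club_f : ∀ α, α ≤ bd → Order.IsSuccLimit α →
    IsClubInOrd α (f α) ∧ otpSet (f α) ≤ Ordinal.lift.{v + 1, v} κ.ord
  coh_f : ∀ α, α ≤ bd → Order.IsSuccLimit α →
    ∀ β, IsLimitPtOrd (f α) β → β < α → f α ∩ Set.Iio β = f β

/-- The order on `S(κ)`: `q ≤ p` iff `q` end-extends `p`. -/
instance (κ : Cardinal.{v}) : Preorder (SCond κ) where
  le q p := p.bd ≤ q.bd ∧ ∀ α ≤ p.bd, q.f α = p.f α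
  le_refl p := ⟨le_refl _, fun _ _ => rfl⟩
  le_trans a b c hab hbc :=
    ⟨hbc.1.trans hab.1, fun α hα => (hab.2 α (hα.trans hbc.1)).trans (hbc.2 α hα)⟩

section Aux
open Ordinal Set Order

open Ordinal Set Order

lemma IsLimitPtOrd.isLimit {C : Set Ordinal.{v}} {β : Ordinal.{v}} (h : IsLimitPtOrd C β) :
    Order.IsSuccLimit β := by
  refine Ordinal.isSuccLimit_iff.2 ⟨h.1.ne', Order.isSuccPrelimit_of_succ_lt fun a ha => ?_⟩
  obtain ⟨δ, -, h1, h2⟩ := h.2 a ha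
  exact lt_of_le_of_lt (Order.succ_le_of_lt h1) h2

lemma otpSet_Iio (θ : Ordinal.{v}) : otpSet (Set.Iio θ) = Ordinal.lift.{v+1} θ :=
  Ordinal.typein_ordinal θ

lemma otpSet_image {θ : Ordinal.{v}} {t : Ordinal.{v} → Ordinal.{v}}
    (ht : ∀ i1, i1 < θ → ∀ i2, i2 < θ → i1 < i2 → t i1 < t i2) :
    otpSet {x | ∃ i < θ, t i = x} = Ordinal.lift.{v+1} θ := by
  have key : ∀ a b : Set.Iio θ, t a.1 < t b.1 ↔ a.1 < b.1 := by
    intro a b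
    constructor
    · intro h
      by_contra hc
      rcases (not_lt.1 hc).lt_or_eq with h' | h'
      · exact absurd (ht _ b.2 _ a.2 h') (not_lt.2 h.le)
      · rw [h'] at h; exact lt_irrefl _ h
    · exact fun h => ht _ a.2 _ b.2 h
  have hbij : Function.Bijective (fun a : Set.Iio θ =>
      (⟨t a.1, a.1, a.2, rfl⟩ : {x | ∃ i < θ, t i = x})) := by
    constructor
    · intro a b hab
      have h1 : t a.1 = t b.1 := congrArg Subtype.val hab
      rcases lt_trichotomy a.1 b.1 with h | h | h
      · exact absurd ((key a b).2 h) (by rw [h1]; exact lt_irrefl _)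
      · exact Subtype.ext h
      · exact absurd ((key b a).2 h) (by rw [h1]; exact lt_irrefl _)
    · rintro ⟨x, i, hi, rfl⟩
      exact ⟨⟨i, hi⟩, rfl⟩
  have iso : Subrel ((· < ·) : Ordinal.{v} → Ordinal.{v} → Prop) (· ∈ Set.Iio θ) ≃r
      Subrel ((· < ·) : Ordinal.{v} → Ordinal.{v} → Prop) (· ∈ {x | ∃ i < θ, t i = x}) :=
    ⟨Equiv.ofBijective _ hbij, by
      intro a b
      exact key a b⟩
  have h2 : otpSet {x | ∃ i < θ, t i = x} = otpSet (Set.Iio θ) :=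
    (Ordinal.type_eq.2 ⟨iso⟩).symm
  rw [h2, otpSet_Iio]

lemma not_isLimit_between {c δ : Ordinal.{v}} (h1 : c < δ) (h2 : δ < c + ω) : ¬ Order.IsSuccLimit δ := by
  intro hl
  have hd : c + (δ - c) = δ := Ordinal.add_sub_cancel_of_le h1.le
  have h3 : δ - c < ω := by
    rw [← add_lt_add_iff_left c, hd]; exact h2
  have h4 : Order.IsSuccLimit (δ - c) := by
    rcases Ordinal.zero_or_succ_or_isSuccLimit (δ - c) with h | ⟨a, ha⟩ | h
    · rw [h, add_zero] at hd; exact absurd hd h1.ne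
    · rw [← ha] at hd
      rw [← hd, Ordinal.add_succ] at hl
      exact absurd hl (Order.not_isSuccLimit_succ _)
    · exact h
  exact absurd (Ordinal.omega0_le_of_isSuccLimit h4) (not_le.2 h3)

lemma Ioo_omega_eq (c : Ordinal.{v}) :
    Set.Ioo c (c + ω) = {x | ∃ i < (ω : Ordinal.{v}), c + 1 + i = x} := by
  ext x
  constructor
  · rintro ⟨h1, h2⟩
    have h1' : c + 1 ≤ x := by
      rw [Ordinal.add_one_eq_succ]; exact Order.succ_le_of_lt h1
    refine ⟨x - (c + 1), ?_, Ordinal.add_sub_cancel_of_le h1'⟩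
    rw [← add_lt_add_iff_left (c + 1), Ordinal.add_sub_cancel_of_le h1', add_assoc,
      Ordinal.one_add_omega0]
    exact h2
  · rintro ⟨i, hi, rfl⟩
    constructor
    · have hc1 : c < c + 1 := by
        rw [Ordinal.add_one_eq_succ]; exact Order.lt_succ c
      exact lt_of_lt_of_le hc1 (le_self_add)
    · obtain ⟨n, rfl⟩ := Ordinal.lt_omega0.1 hi
      rw [add_assoc, add_lt_add_iff_left]
      rw [show (1 : Ordinal.{v}) + (n : Ordinal.{v}) = ((1 + n : ℕ) : Ordinal.{v}) by
        rw [Nat.cast_add, Nat.cast_one]]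
      exact Ordinal.nat_lt_omega0 (1 + n)


lemma noLimitPt_Ioo_omega (c : Ordinal.{v}) {β : Ordinal.{v}}
    (hpt : IsLimitPtOrd (Set.Ioo c (c + ω)) β) (hβ : β < c + ω) : False := by
  have hcβ : c < β := by
    obtain ⟨δ, hδ, -, h2⟩ := hpt.2 0 hpt.1
    exact lt_trans hδ.1 h2
  exact not_isLimit_between hcβ hβ hpt.isLimit

lemma isClub_Ioo_omega (c : Ordinal.{v}) : IsClubInOrd (c + ω) (Set.Ioo c (c + ω)) := by
  refine ⟨fun β hβ => hβ.2, fun β hβ => ?_, fun β hβ hpt => absurd (noLimitPt_Ioo_omega c hpt hβ) id⟩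
  have hc1 : c < c + 1 := by rw [Ordinal.add_one_eq_succ]; exact Order.lt_succ c
  have hc1' : c + 1 < c + ω := by
    rw [add_lt_add_iff_left]; exact Ordinal.one_lt_omega0
  by_cases h : c < β
  · exact ⟨β, ⟨h, hβ⟩, le_refl β⟩
  · exact ⟨c + 1, ⟨hc1, hc1'⟩, (not_lt.1 h).trans hc1.le⟩

lemma otp_Ioo_omega (c : Ordinal.{v}) :
    otpSet (Set.Ioo c (c + ω)) = Ordinal.lift.{v+1} (ω : Ordinal.{v}) := by
  rw [Ioo_omega_eq]
  refine otpSet_image (fun i1 h1 i2 h2 h => ?_)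
  rw [add_lt_add_iff_left]
  exact h

lemma lift_omega_le {κ : Cardinal.{v}} (hκ : Cardinal.aleph0 ≤ κ) :
    Ordinal.lift.{v+1} (ω : Ordinal.{v}) ≤ Ordinal.lift.{v+1} κ.ord := by
  apply Ordinal.lift_le.2
  rw [← Cardinal.ord_aleph0]
  exact Cardinal.ord_le_ord.2 hκ

lemma limit_le_of_lt_add_omega {c δ : Ordinal.{v}} (hlim : Order.IsSuccLimit δ) (h : δ < c + ω) :
    δ ≤ c := by
  by_contra hc
  exact not_isLimit_between (not_le.1 hc) h hlim

lemma base_exists (κ : Cardinal.{v}) (hκ : Cardinal.aleph0 ≤ κ) : Nonempty (SCond κ) := by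
  refine ⟨{ bd := 0 + ω
            bd_lim := Ordinal.isSuccLimit_add 0 Ordinal.isSuccLimit_omega0
            bd_lt := ?_
            f := fun δ => if δ = 0 + ω then Set.Ioo 0 (0 + ω) else ∅
            dom_f := ?_
            club_f := ?_
            coh_f := ?_ }⟩
  · rw [zero_add, Cardinal.lt_ord, Ordinal.card_omega0]
    exact lt_of_le_of_lt hκ (Order.lt_succ κ)
  · intro δ hδ
    beta_reduce
    rw [if_neg]
    intro h
    exact hδ ⟨h.le, by rw [h]; exact Ordinal.isSuccLimit_add 0 Ordinal.isSuccLimit_omega0⟩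
  · intro δ hδ hlim
    have hδω : δ = 0 + ω := by
      apply le_antisymm hδ
      rw [zero_add]
      exact Ordinal.omega0_le_of_isSuccLimit hlim
    subst hδω
    beta_reduce
    rw [if_pos rfl]
    exact ⟨isClub_Ioo_omega 0, le_trans (le_of_eq (otp_Ioo_omega 0)) (lift_omega_le hκ)⟩
  · intro δ hδ hlim β hpt hβδ
    have hδω : δ = 0 + ω := by
      apply le_antisymm hδ
      rw [zero_add]
      exact Ordinal.omega0_le_of_isSuccLimit hlim
    subst hδω
    beta_reduce at hpt ⊢
    rw [if_pos rfl] at hpt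
    exact absurd (noLimitPt_Ioo_omega 0 hpt hβδ) id

lemma step_exists {κ : Cardinal.{v}} (hκ : Cardinal.aleph0 ≤ κ) (r : SCond κ) :
    ∃ q : SCond κ, q ≤ r ∧ q.bd = r.bd + ω := by
  have htop : Order.IsSuccLimit (r.bd + ω) := Ordinal.isSuccLimit_add _ Ordinal.isSuccLimit_omega0
  have hlt : ∀ δ : Ordinal.{v}, δ ≤ r.bd → δ ≠ r.bd + ω := by
    intro δ h1 h2
    rw [h2] at h1
    have : r.bd < r.bd + ω := by
      conv_lhs => rw [← add_zero r.bd]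
      rw [add_lt_add_iff_left]
      exact Ordinal.omega0_pos
    exact absurd (lt_of_lt_of_le this h1) (lt_irrefl _)
  refine ⟨{ bd := r.bd + ω
            bd_lim := htop
            bd_lt := ?_
            f := fun δ => if δ = r.bd + ω then Set.Ioo r.bd (r.bd + ω) else r.f δ
            dom_f := ?_
            club_f := ?_
            coh_f := ?_ }, ⟨le_self_add, fun γ hγ => if_neg (hlt γ hγ)⟩, rfl⟩
  · rw [Cardinal.lt_ord, Ordinal.card_add, Ordinal.card_omega0]
    refine Cardinal.add_lt_of_lt (le_trans hκ (Order.le_succ κ)) ?_ ?_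
    · rw [← Cardinal.lt_ord]; exact r.bd_lt
    · exact lt_of_le_of_lt hκ (Order.lt_succ κ)
  · intro δ hδ
    beta_reduce
    rw [if_neg (fun h : δ = r.bd + ω => hδ ⟨h.le, by rw [h]; exact htop⟩)]
    apply r.dom_f
    rintro ⟨h1, h2⟩
    exact hδ ⟨h1.trans (le_self_add), h2⟩
  · intro δ hδ hlim
    by_cases hδT : δ = r.bd + ω
    · subst hδT
      beta_reduce
      rw [if_pos rfl]
      exact ⟨isClub_Ioo_omega r.bd,
        le_trans (le_of_eq (otp_Ioo_omega r.bd)) (lift_omega_le hκ)⟩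
    · have hδ' : δ ≤ r.bd := limit_le_of_lt_add_omega hlim (lt_of_le_of_ne hδ hδT)
      beta_reduce
      rw [if_neg hδT]
      exact r.club_f δ hδ' hlim
  · intro δ hδ hlim β hpt hβδ
    by_cases hδT : δ = r.bd + ω
    · subst hδT
      beta_reduce at hpt
      rw [if_pos rfl] at hpt
      exact absurd (noLimitPt_Ioo_omega r.bd hpt hβδ) id
    · have hδ' : δ ≤ r.bd := limit_le_of_lt_add_omega hlim (lt_of_le_of_ne hδ hδT)
      have hβ' : β ≤ r.bd := (hβδ.trans_le hδ').le
      beta_reduce at hpt ⊢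
      rw [if_neg hδT] at hpt
      rw [if_neg hδT, if_neg (hlt β hβ')]
      exact r.coh_f δ hδ' hlim β hpt hβδ

end Aux

def TowerOK (κ : Cardinal.{v}) (j : Ordinal.{v}) (Q : Ordinal.{v} → SCond κ) : Prop :=
  (∀ i1 i2, i1 ≤ i2 → i2 < j → Q i2 ≤ Q i1) ∧
  (∀ i1 i2, i1 < i2 → i2 < j → (Q i1).bd < (Q i2).bd) ∧
  (∀ i, i < j → Order.IsSuccLimit i →
    (Q i).bd = Ordinal.bsup i (fun m _ => (Q m).bd) ∧
    (Q i).f ((Q i).bd) = {x | ∃ m < i, (Q m).bd = x})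

def UnionEx (κ : Cardinal.{v}) (j : Ordinal.{v}) (Q : Ordinal.{v} → SCond κ) : Prop :=
  ∃ q : SCond κ, (∀ i < j, q ≤ Q i) ∧
    q.bd = Ordinal.bsup j (fun m _ => (Q m).bd) ∧
    q.f q.bd = {x | ∃ m < j, (Q m).bd = x}

lemma bsup_bd_congr {κ : Cardinal.{v}} {j : Ordinal.{v}} {Q Q' : Ordinal.{v} → SCond κ}
    (h : ∀ m < j, Q m = Q' m) :
    Ordinal.bsup j (fun m _ => (Q m).bd) = Ordinal.bsup j (fun m _ => (Q' m).bd) := by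
  congr 1
  funext m hm
  rw [h m hm]

lemma setOf_bd_congr {κ : Cardinal.{v}} {j : Ordinal.{v}} {Q Q' : Ordinal.{v} → SCond κ}
    (h : ∀ m < j, Q m = Q' m) :
    {x | ∃ m < j, (Q m).bd = x} = {x | ∃ m < j, (Q' m).bd = x} := by
  ext x
  constructor <;> rintro ⟨m, hm, rfl⟩ <;> exact ⟨m, hm, by rw [h m hm]⟩

lemma unionEx_congr {κ : Cardinal.{v}} {j : Ordinal.{v}} {Q Q' : Ordinal.{v} → SCond κ}
    (h : ∀ m < j, Q m = Q' m) (hU : UnionEx κ j Q) : UnionEx κ j Q' := by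
  obtain ⟨q, h1, h2, h3⟩ := hU
  exact ⟨q, fun i hi => (h i hi) ▸ h1 i hi, h2.trans (bsup_bd_congr h),
    h3.trans (setOf_bd_congr h)⟩

lemma towerOK_congr {κ : Cardinal.{v}} {j : Ordinal.{v}} {Q Q' : Ordinal.{v} → SCond κ}
    (h : ∀ m < j, Q m = Q' m) (hOK : TowerOK κ j Q) : TowerOK κ j Q' := by
  obtain ⟨h1, h2, h3⟩ := hOK
  refine ⟨?_, ?_, ?_⟩
  · intro i1 i2 h12 h2j
    rw [← h i1 (lt_of_le_of_lt h12 h2j), ← h i2 h2j]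
    exact h1 i1 i2 h12 h2j
  · intro i1 i2 h12 h2j
    rw [← h i1 (h12.trans h2j), ← h i2 h2j]
    exact h2 i1 i2 h12 h2j
  · intro i hij hlim
    obtain ⟨e1, e2⟩ := h3 i hij hlim
    rw [← h i hij]
    constructor
    · rw [e1]
      exact bsup_bd_congr (fun m hm => h m (hm.trans hij))
    · rw [e2]
      exact setOf_bd_congr (fun m hm => h m (hm.trans hij))

lemma unionLemma (κ : Cardinal.{v}) (hreg : κ.IsRegular) {j : Ordinal.{v}} (hj : Order.IsSuccLimit j)
    (hjκ : j ≤ κ.ord) (Q : Ordinal.{v} → SCond κ) (hOK : TowerOK κ j Q) :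
    UnionEx κ j Q := by
  classical
  obtain ⟨hdesc, hmono, hlims⟩ := hOK
  set T : Ordinal.{v} := Ordinal.bsup j (fun m _ => (Q m).bd) with hT
  set CT : Set Ordinal.{v} := {x | ∃ m < j, (Q m).bd = x} with hCT
  have hmono' : ∀ m1 m2, m1 ≤ m2 → m2 < j → (Q m1).bd ≤ (Q m2).bd := by
    intro m1 m2 h h2
    rcases h.lt_or_eq with h | rfl
    · exact (hmono _ _ h h2).le
    · exact le_rfl
  have hF1 : ∀ m, m < j → (Q m).bd < T := by
    intro m hm
    refine lt_of_lt_of_le (hmono m (Order.succ m) (Order.lt_succ m) (hj.succ_lt hm)) ?_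
    exact Ordinal.le_bsup _ (Order.succ m) (hj.succ_lt hm)
  have hTlim : Order.IsSuccLimit T := by
    refine Ordinal.isSuccLimit_iff.2 ⟨?_, Order.isSuccPrelimit_of_succ_lt ?_⟩
    · intro h0
      have := hF1 0 hj.pos
      rw [h0] at this
      exact not_lt_zero this
    · intro a ha
      obtain ⟨m, hm, ham⟩ := (Ordinal.lt_bsup _).1 ha
      exact lt_of_le_of_lt (Order.succ_le_of_lt ham) (hF1 m hm)
  have hTlt : T < (Order.succ κ).ord := by
    apply Cardinal.bsup_lt_ord_of_isRegular (Cardinal.isRegular_succ hreg.aleph0_le)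
    · refine lt_of_le_of_lt ?_ (Order.lt_succ κ)
      rw [← Cardinal.card_ord κ]
      exact Ordinal.card_le_card hjκ
    · exact fun m _ => (Q m).bd_lt
  have hagree : ∀ m, m < j → ∀ δ, δ ≤ (Q m).bd →
      (⋃ m' : Set.Iio j, (Q m'.1).f δ) = (Q m).f δ := by
    intro m hm δ hδ
    apply Set.Subset.antisymm
    · apply Set.iUnion_subset
      rintro ⟨m', hm'⟩
      rcases le_total m' m with h | h
      · by_cases hδ' : δ ≤ (Q m').bd
        · rw [← (hdesc m' m h hm).2 δ hδ']
        · rw [(Q m').dom_f δ (fun hc => hδ' hc.1)]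
          exact Set.empty_subset _
      · rw [(hdesc m m' h hm').2 δ hδ]
    · exact Set.subset_iUnion (fun m' : Set.Iio j => (Q m'.1).f δ) ⟨m, hm⟩
  have hLP : ∀ β, IsLimitPtOrd CT β → β < T →
      ∃ j', j' < j ∧ Order.IsSuccLimit j' ∧ (Q j').bd = β ∧
        CT ∩ Set.Iio β = {x | ∃ m < j', (Q m).bd = x} := by
    intro β hpt hβT
    set S : Set Ordinal.{v} := {m | m < j ∧ (Q m).bd < β} with hS
    have hSne : S.Nonempty := by
      obtain ⟨δ, hδC, -, hδβ⟩ := hpt.2 0 hpt.1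
      obtain ⟨m, hm, rfl⟩ := hδC
      exact ⟨m, hm, hδβ⟩
    have hSbdd : BddAbove S := ⟨j, fun m hm => hm.1.le⟩
    set j' := sSup S with hj'
    have hnomax : ∀ m0 ∈ S, ∃ m1 ∈ S, m0 < m1 := by
      intro m0 hm0
      obtain ⟨δ, hδC, hgt, hδβ⟩ := hpt.2 ((Q m0).bd) hm0.2
      obtain ⟨m1, hm1, rfl⟩ := hδC
      refine ⟨m1, ⟨hm1, hδβ⟩, ?_⟩
      by_contra hc
      exact absurd (hmono' m1 m0 (not_lt.1 hc) hm0.1) (not_le.2 hgt)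
    have hSIio : S = Set.Iio j' := by
      ext m
      constructor
      · intro hm
        obtain ⟨m1, hm1, hlt⟩ := hnomax m hm
        exact lt_of_lt_of_le hlt (le_csSup hSbdd hm1)
      · intro hm
        obtain ⟨s, hs, hms⟩ := exists_lt_of_lt_csSup hSne hm
        exact ⟨hms.trans hs.1, lt_of_le_of_lt (hmono' m s hms.le hs.1) hs.2⟩
    have hj'lim : Order.IsSuccLimit j' := by
      refine Ordinal.isSuccLimit_iff.2 ⟨?_, Order.isSuccPrelimit_of_succ_lt ?_⟩
      · intro h0
        obtain ⟨m, hm⟩ := hSne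
        have : m < j' := by rw [← Set.mem_Iio, ← hSIio]; exact hm
        rw [h0] at this
        exact not_lt_zero this
      · intro a ha
        have haS : a ∈ S := by rw [hSIio]; exact ha
        obtain ⟨m1, hm1, h1⟩ := hnomax a haS
        have hm1' : m1 < j' := by rw [← Set.mem_Iio, ← hSIio]; exact hm1
        exact lt_of_le_of_lt (Order.succ_le_of_lt h1) hm1'
    have hj'j : j' < j := by
      rcases lt_or_eq_of_le (csSup_le hSne (fun m hm => hm.1.le)) with h | h
      · exact h
      · exfalso
        refine absurd hβT (not_lt.2 ?_)
        rw [hT]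
        apply Ordinal.bsup_le
        intro m hm
        rw [← hj'] at h
        have hmS : m ∈ S := by rw [hSIio, Set.mem_Iio, h]; exact hm
        exact hmS.2.le
    have hbsupeq := (hlims j' hj'j hj'lim).1
    have hbd : (Q j').bd = β := by
      apply le_antisymm
      · rw [hbsupeq]
        apply Ordinal.bsup_le
        intro m hm
        have hmS : m ∈ S := by rw [hSIio]; exact hm
        exact hmS.2.le
      · by_contra hc
        have h1 : (Q j').bd < β := not_le.1 hc
        obtain ⟨δ, hδC, hgt, hδβ⟩ := hpt.2 ((Q j').bd) h1
        obtain ⟨m, hm, rfl⟩ := hδC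
        have hmj' : m < j' := by
          rw [← Set.mem_Iio, ← hSIio]; exact ⟨hm, hδβ⟩
        have : (Q m).bd ≤ (Q j').bd := by
          rw [hbsupeq]; exact Ordinal.le_bsup _ m hmj'
        exact absurd hgt (not_lt.2 this)
    refine ⟨j', hj'j, hj'lim, hbd, ?_⟩
    ext x
    constructor
    · rintro ⟨⟨m, hm, rfl⟩, hx⟩
      have : m ∈ S := ⟨hm, hx⟩
      rw [hSIio] at this
      exact ⟨m, this, rfl⟩
    · rintro ⟨m, hm, rfl⟩
      have hmS : m ∈ S := by rw [hSIio]; exact hm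
      exact ⟨⟨m, hmS.1, rfl⟩, hmS.2⟩
  refine ⟨{ bd := T
            bd_lim := hTlim
            bd_lt := hTlt
            f := fun δ => if δ = T then CT else ⋃ m' : Set.Iio j, (Q m'.1).f δ
            dom_f := ?_
            club_f := ?_
            coh_f := ?_ }, ?_, rfl, ?_⟩
  · intro δ hδ
    beta_reduce
    have hδT : δ ≠ T := fun h => hδ ⟨h.le, by rw [h]; exact hTlim⟩
    rw [if_neg hδT]
    apply Set.iUnion_eq_empty.2
    rintro ⟨m', hm'⟩
    apply (Q m').dom_f
    rintro ⟨h1, h2⟩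
    exact hδ ⟨h1.trans (hF1 m' hm').le, h2⟩
  · intro δ hδ hlim
    beta_reduce
    by_cases hδT : δ = T
    · subst hδT
      rw [if_pos rfl]
      constructor
      · refine ⟨?_, ?_, ?_⟩
        · rintro β ⟨m, hm, rfl⟩
          exact hF1 m hm
        · intro β hβ
          obtain ⟨m, hm, h⟩ := (Ordinal.lt_bsup _).1 hβ
          exact ⟨(Q m).bd, ⟨m, hm, rfl⟩, h.le⟩
        · intro β hβ hpt
          obtain ⟨j', hj'1, -, hj'3, -⟩ := hLP β hpt hβ
          exact ⟨j', hj'1, hj'3⟩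
      · rw [hCT]
        rw [otpSet_image (fun i1 h1 i2 h2 h => hmono i1 i2 h h2)]
        exact Ordinal.lift_le.2 hjκ
    · have hδ' : δ < T := lt_of_le_of_ne hδ hδT
      obtain ⟨m, hm, hδm⟩ := (Ordinal.lt_bsup _).1 hδ'
      rw [if_neg hδT, hagree m hm δ hδm.le]
      exact (Q m).club_f δ hδm.le hlim
  · intro δ hδ hlim β hpt hβδ
    beta_reduce at hpt ⊢
    by_cases hδT : δ = T
    · subst hδT
      rw [if_pos rfl] at hpt
      obtain ⟨j', hj'1, hj'2, hj'3, hj'4⟩ := hLP β hpt hβδ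
      rw [if_pos rfl, if_neg hβδ.ne, hj'4, hagree j' hj'1 β hj'3.ge]
      rw [← hj'3]
      exact ((hlims j' hj'1 hj'2).2).symm
    · have hδ' : δ < T := lt_of_le_of_ne hδ hδT
      obtain ⟨m, hm, hδm⟩ := (Ordinal.lt_bsup _).1 hδ'
      have hβm : β ≤ (Q m).bd := (hβδ.trans hδm).le
      have hβT : β ≠ T := (hβδ.trans hδ').ne
      rw [if_neg hδT, hagree m hm δ hδm.le] at hpt
      rw [if_neg hδT, if_neg hβT, hagree m hm δ hδm.le, hagree m hm β hβm]
      exact (Q m).coh_f δ hδm.le hlim β hpt hβδ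
  · intro i hi
    refine ⟨(hF1 i hi).le, fun γ hγ => ?_⟩
    show (if γ = T then CT else ⋃ m' : Set.Iio j, (Q m'.1).f γ) = (Q i).f γ
    rw [if_neg (hγ.trans_lt (hF1 i hi)).ne, hagree i hi γ hγ]
  · show (if T = T then CT else ⋃ m' : Set.Iio j, (Q m'.1).f T) = {x | ∃ m < j, (Q m).bd = x}
    rw [if_pos rfl]

lemma density (κ : Cardinal.{v}) (hreg : κ.IsRegular) :
    ∀ α : Ordinal.{v}, α < (Order.succ κ).ord → ∀ p : SCond κ,
      ∃ q : SCond κ, q ≤ p ∧ α ≤ q.bd := by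
  intro α
  induction α using Ordinal.induction with
  | h α IH =>
  intro hα p
  classical
  by_cases hzero : α = 0
  · exact ⟨p, le_refl p, hzero ▸ zero_le⟩
  have hαpos : 0 < α := pos_iff_ne_zero.2 hzero
  -- a covering family
  obtain ⟨u, hu1, hu2⟩ : ∃ u : Ordinal.{v} → Ordinal.{v},
      (∀ i, u i < α) ∧ ∀ β < α, ∃ i < κ.ord, β ≤ u i := by
    have hcard : Cardinal.mk (Set.Iio α) ≤ Cardinal.mk (Set.Iio κ.ord) := by
      rw [Ordinal.mk_Iio_ordinal, Ordinal.mk_Iio_ordinal, Cardinal.card_ord]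
      exact Cardinal.lift_le.2 (Order.lt_succ_iff.1 (Cardinal.lt_ord.1 hα))
    obtain ⟨e⟩ := Cardinal.le_def _ _ |>.1 hcard
    refine ⟨fun i => if h : ∃ β : Set.Iio α, ((e β : Set.Iio κ.ord) : Ordinal.{v}) = i
      then ((Classical.choose h : Set.Iio α) : Ordinal.{v}) else 0, ?_, ?_⟩
    · intro i
      by_cases h : ∃ β : Set.Iio α, ((e β : Set.Iio κ.ord) : Ordinal.{v}) = i
      · beta_reduce; rw [dif_pos h]; exact (Classical.choose h).2
      · beta_reduce; rw [dif_neg h]; exact hαpos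
    · intro β hβ
      refine ⟨(e ⟨β, hβ⟩ : Set.Iio κ.ord), (e ⟨β, hβ⟩).2, ?_⟩
      have h : ∃ β' : Set.Iio α,
          ((e β' : Set.Iio κ.ord) : Ordinal.{v}) = ((e ⟨β, hβ⟩ : Set.Iio κ.ord) : Ordinal.{v}) :=
        ⟨⟨β, hβ⟩, rfl⟩
      have hspec := Classical.choose_spec h
      have heq : Classical.choose h = ⟨β, hβ⟩ := e.injective (Subtype.ext hspec)
      beta_reduce
      rw [dif_pos h, heq]
  -- successor step
  have hstep : ∀ (r : SCond κ) (i : Ordinal.{v}),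
      ∃ q : SCond κ, q ≤ r ∧ u i ≤ q.bd ∧ r.bd < q.bd := by
    intro r i
    obtain ⟨r', hr', hbd⟩ := IH (u i) (hu1 i) ((hu1 i).trans hα) r
    obtain ⟨q, hq, hqbd⟩ := step_exists hreg.aleph0_le r'
    have h1 : r'.bd < q.bd := by
      rw [hqbd]
      conv_lhs => rw [← add_zero r'.bd]
      rw [add_lt_add_iff_left]
      exact Ordinal.omega0_pos
    exact ⟨q, hq.trans hr', hbd.trans (le_of_lt (lt_of_le_of_lt (le_refl _) h1)),
      lt_of_le_of_lt hr'.1 h1⟩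
  -- the tower
  obtain ⟨Q, hQ0, hQsucc, hQlim⟩ : ∃ Q : Ordinal.{v} → SCond κ, Q 0 = p ∧
      (∀ i, Q (Order.succ i) ≤ Q i ∧ u i ≤ (Q (Order.succ i)).bd ∧
        (Q i).bd < (Q (Order.succ i)).bd) ∧
      (∀ j, Order.IsSuccLimit j → UnionEx κ j Q →
        (∀ i < j, Q j ≤ Q i) ∧ (Q j).bd = Ordinal.bsup j (fun m _ => (Q m).bd) ∧
        (Q j).f ((Q j).bd) = {x | ∃ m < j, (Q m).bd = x}) := by
    classical
    set F : Ordinal.{v} → SCond κ := fun i => Ordinal.limitRecOn i p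
      (fun i' r => Classical.choose (hstep r i'))
      (fun j _ G =>
        if h : UnionEx κ j (fun m => if hm : m < j then G m hm else p)
        then Classical.choose h else p) with hF
    refine ⟨F, ?_, ?_, ?_⟩
    · exact Ordinal.limitRecOn_zero _ _ _
    · intro i
      have heq : F (Order.succ i) = Classical.choose (hstep (F i) i) :=
        Ordinal.limitRecOn_succ _ _ _ _
      rw [heq]
      exact Classical.choose_spec (hstep (F i) i)
    · intro j hj hU
      have heq : F j = (if h : UnionEx κ j (fun m => if hm : m < j then F m else p)
          then Classical.choose h else p) :=
        Ordinal.limitRecOn_limit _ _ _ _ hj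
      have hcongr : ∀ m, m < j → F m = (if hm : m < j then F m else p) :=
        fun m hm => by rw [dif_pos hm]
      have hUe : UnionEx κ j (fun m => if hm : m < j then F m else p) :=
        unionEx_congr hcongr hU
      have heq2 : F j = Classical.choose hUe := heq.trans (dif_pos hUe)
      obtain ⟨h1, h2, h3⟩ := Classical.choose_spec hUe
      rw [heq2]
      refine ⟨fun i hi => ?_, ?_, ?_⟩
      · rw [hcongr i hi]
        exact h1 i hi
      · rw [h2]
        exact (bsup_bd_congr hcongr).symm
      · rw [h3]
        exact (setOf_bd_congr hcongr).symm
  -- the invariant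
  have hMAIN : ∀ i, i ≤ κ.ord → TowerOK κ (Order.succ i) Q := by
    intro i
    induction i using Ordinal.induction with
    | h i IH2 =>
    intro hiκ
    have hOKi : TowerOK κ i Q := by
      refine ⟨?_, ?_, ?_⟩
      · intro i1 i2 h12 h2i
        exact (IH2 i2 h2i ((le_of_lt h2i).trans hiκ)).1 i1 i2 h12 (Order.lt_succ i2)
      · intro i1 i2 h12 h2i
        exact (IH2 i2 h2i ((le_of_lt h2i).trans hiκ)).2.1 i1 i2 h12 (Order.lt_succ i2)
      · intro i' hi' hlim
        exact (IH2 i' hi' ((le_of_lt hi').trans hiκ)).2.2 i' (Order.lt_succ i') hlim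
    -- extend to succ i
    have hA : (∀ i1, i1 ≤ i → Q i ≤ Q i1) ∧ (∀ i1, i1 < i → (Q i1).bd < (Q i).bd) ∧
        (Order.IsSuccLimit i → (Q i).bd = Ordinal.bsup i (fun m _ => (Q m).bd) ∧
          (Q i).f ((Q i).bd) = {x | ∃ m < i, (Q m).bd = x}) := by
      rcases Ordinal.zero_or_succ_or_isSuccLimit i with h0 | ⟨k, hk⟩ | hlim
      · subst h0
        refine ⟨fun i1 h1 => ?_, fun i1 h1 => ?_, fun hlim => absurd hlim Ordinal.not_isSuccLimit_zero⟩
        · rw [le_antisymm h1 zero_le]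
        · exact absurd h1 not_lt_zero
      · subst hk
        obtain ⟨hs1, hs2, hs3⟩ := hQsucc k
        refine ⟨fun i1 h1 => ?_, fun i1 h1 => ?_,
          fun hlim => absurd hlim (Order.not_isSuccLimit_succ k)⟩
        · rcases (Order.le_succ_iff_eq_or_le.1 h1) with rfl | h1'
          · exact le_refl _
          · exact hs1.trans (hOKi.1 i1 k h1' (Order.lt_succ k))
        · have h1' : i1 ≤ k := Order.lt_succ_iff.1 h1
          rcases h1'.lt_or_eq with h | rfl
          · exact lt_trans (hOKi.2.1 i1 k h (Order.lt_succ k)) hs3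
          · exact hs3
      · have hU : UnionEx κ i Q := unionLemma κ hreg hlim hiκ Q hOKi
        obtain ⟨L1, L2, L3⟩ := hQlim i hlim hU
        refine ⟨fun i1 h1 => ?_, fun i1 h1 => ?_, fun _ => ⟨L2, L3⟩⟩
        · rcases h1.lt_or_eq with h | rfl
          · exact L1 i1 h
          · exact le_refl _
        · have := (hQsucc i1).2.2
          refine lt_of_lt_of_le this ?_
          rw [L2]
          exact Ordinal.le_bsup _ (Order.succ i1) (hlim.succ_lt h1)
    refine ⟨?_, ?_, ?_⟩
    · intro i1 i2 h12 h2i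
      rcases (Order.lt_succ_iff.1 h2i).lt_or_eq with h | rfl
      · exact hOKi.1 i1 i2 h12 h
      · exact hA.1 i1 h12
    · intro i1 i2 h12 h2i
      rcases (Order.lt_succ_iff.1 h2i).lt_or_eq with h | rfl
      · exact hOKi.2.1 i1 i2 h12 h
      · exact hA.2.1 i1 h12
    · intro i' hi' hlim
      rcases (Order.lt_succ_iff.1 hi').lt_or_eq with h | rfl
      · exact hOKi.2.2 i' h hlim
      · exact hA.2.2 hlim
  -- conclusion
  have hκord : Order.IsSuccLimit (κ.ord : Ordinal.{v}) := Cardinal.isSuccLimit_ord hreg.aleph0_le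
  have hT := hMAIN κ.ord (le_refl _)
  refine ⟨Q κ.ord, ?_, ?_⟩
  · have := hT.1 0 κ.ord (zero_le) (Order.lt_succ _)
    rwa [hQ0] at this
  · by_contra hc
    obtain ⟨i, hiκ', hile⟩ := hu2 ((Q κ.ord).bd) (not_le.1 hc)
    have h1 : u i ≤ (Q (Order.succ i)).bd := (hQsucc i).2.1
    have h2 : (Q (Order.succ i)).bd < (Q κ.ord).bd :=
      hT.2.1 (Order.succ i) κ.ord (hκord.succ_lt hiκ') (Order.lt_succ _)
    exact absurd (lt_of_le_of_lt (hile.trans h1) h2) (lt_irrefl _)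

theorem scond_not_stronglyDistrib' (κ : Cardinal.{v}) (hreg : κ.IsRegular)
    (hunc : Cardinal.aleph0 < κ)
    (hsq : ¬ ∃ C : Ordinal.{v} → Set Ordinal.{v}, SquareSeq κ C) :
    ¬ StronglyDistrib (Order.succ κ) (SCond κ) := by
  intro hSD
  obtain ⟨p0⟩ := base_exists κ hreg.aleph0_le
  have hD : ∀ α < (Order.succ κ).ord, OpenDense {p : SCond κ | α ≤ p.bd} := by
    intro α hα
    constructor
    · intro p hp q hq
      exact le_trans hp hq.1
    · intro p
      obtain ⟨q, hq, hbd⟩ := density κ hreg α hα p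
      exact ⟨q, hq, hbd⟩
  obtain ⟨f, -, hdesc, hmem⟩ := hSD (fun α => {p : SCond κ | α ≤ p.bd}) hD p0
  apply hsq
  refine ⟨fun β => (f β).f β, ?_⟩
  intro α hα hlim
  have hαbd : α ≤ (f α).bd := hmem α hα
  obtain ⟨hclub, hotp⟩ := (f α).club_f α hαbd hlim
  refine ⟨hclub, hotp, ?_⟩
  intro β hpt hβα
  have h1 : (f α).f α ∩ Set.Iio β = (f α).f β := (f α).coh_f α hαbd hlim β hpt hβα
  have hβκ : β < (Order.succ κ).ord := hβα.trans hα
  have h2 : (f α).f β = (f β).f β := (hdesc β α hβα.le hα).2 β (hmem β hβκ)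
  rw [h1, h2]

/-- If `□_κ` fails, then the poset `S(κ)` adding a `□_κ`-sequence by initial segments
is not strongly `<κ⁺`-distributive. -/
theorem scond_not_stronglyDistrib (κ : Cardinal.{v}) (hreg : κ.IsRegular)
    (hunc : Cardinal.aleph0 < κ)
    (hsq : ¬ ∃ C : Ordinal.{v} → Set Ordinal.{v}, SquareSeq κ C) :
    ¬ StronglyDistrib (Order.succ κ) (SCond κ) := by
  exact scond_not_stronglyDistrib' κ hreg hunc hsq
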